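/- arXiv:2505.05898 — 8 statements merged into one kernel-verified Lean document; each statement's English description precedes it below -/
import Mathlib

section
/- Let g be a 3-dimensional real Lie algebra with orthonormal basis E1, E2, E3 and brackets [E1,E2]=0, [E2,E3]=λ1 E1, [E3,E1]=λ2 E2 with λ1 ≥ λ2 > 0. Then the only 2-dimensional Lie subalgebra of g is span{E1,E2}. -/
open Matrix

/-- Bracket of a unimodular 3-dimensional Lie algebra with structure constants
`l1, l2, l3`: `[E1,E2] = l3 E3`, `[E2,E3] = l1 E1`, `[E3,E1] = l2 E2`,
extended bilinearly to `ℝ³`. Here `E1 = ![1,0,0]`, `E2 = ![0,1,0]`, `E3 = ![0,0,1]`. -/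
def brk (l1 l2 l3 : ℝ) (X Y : Fin 3 → ℝ) : Fin 3 → ℝ :=
  ![l1 * (X 1 * Y 2 - X 2 * Y 1),
    l2 * (X 2 * Y 0 - X 0 * Y 2),
    l3 * (X 0 * Y 1 - X 1 * Y 0)]

lemma memP_iff (X : Fin 3 → ℝ) :
    X ∈ Submodule.span ℝ ({![1,0,0], ![0,1,0]} : Set (Fin 3 → ℝ)) ↔ X 2 = 0 := by
  constructor
  · intro hX
    have hle : Submodule.span ℝ ({![1,0,0], ![0,1,0]} : Set (Fin 3 → ℝ)) ≤
        LinearMap.ker (LinearMap.proj (R := ℝ) (φ := fun _ : Fin 3 => ℝ) 2) := by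
      rw [Submodule.span_le]
      rintro x hx
      simp only [Set.mem_insert_iff, Set.mem_singleton_iff] at hx
      rcases hx with rfl | rfl <;> simp [LinearMap.mem_ker]
    simpa using hle hX
  · intro hX
    have hrep : X = X 0 • ![1,0,0] + X 1 • ![0,1,0] := by
      funext i; fin_cases i <;> simp [hX]
    rw [hrep]
    exact Submodule.add_mem _
      (Submodule.smul_mem _ _ (Submodule.subset_span (by simp)))
      (Submodule.smul_mem _ _ (Submodule.subset_span (by simp)))

lemma P_eq_ker :
    Submodule.span ℝ ({![1,0,0], ![0,1,0]} : Set (Fin 3 → ℝ)) =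
      LinearMap.ker (LinearMap.proj (R := ℝ) (φ := fun _ : Fin 3 => ℝ) 2) := by
  ext X
  rw [memP_iff]
  simp [LinearMap.mem_ker]

lemma finrank_P :
    Module.finrank ℝ
      (Submodule.span ℝ ({![1,0,0], ![0,1,0]} : Set (Fin 3 → ℝ))) = 2 := by
  rw [P_eq_ker]
  have hsurj : Function.Surjective
      (LinearMap.proj (R := ℝ) (φ := fun _ : Fin 3 => ℝ) 2) :=
    fun c => ⟨fun _ => c, rfl⟩
  have h := LinearMap.finrank_range_add_finrank_ker
    (LinearMap.proj (R := ℝ) (φ := fun _ : Fin 3 => ℝ) 2)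
  rw [LinearMap.range_eq_top.mpr hsurj] at h
  simp only [finrank_top, Module.finrank_self] at h
  have h3 : Module.finrank ℝ (Fin 3 → ℝ) = 3 := by
    simp [Module.finrank_pi]
  omega

/-- In the Lie algebra of the universal cover of E(2), with brackets
`[E1,E2]=0`, `[E2,E3]=λ1 E1`, `[E3,E1]=λ2 E2`, `λ1 ≥ λ2 > 0`, the only
2-dimensional Lie subalgebra is `span{E1,E2}`. -/
theorem stmt0 (l1 l2 : ℝ) (hl : l1 ≥ l2) (h2 : 0 < l2)
    (h : Submodule ℝ (Fin 3 → ℝ))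
    (hdim : Module.finrank ℝ h = 2)
    (hclosed : ∀ X ∈ h, ∀ Y ∈ h, brk l1 l2 0 X Y ∈ h) :
    h = Submodule.span ℝ {![1,0,0], ![0,1,0]} := by
  set P : Submodule ℝ (Fin 3 → ℝ) :=
    Submodule.span ℝ ({![1,0,0], ![0,1,0]} : Set (Fin 3 → ℝ)) with hP
  have hl1 : 0 < l1 := lt_of_lt_of_le h2 hl
  have h3 : Module.finrank ℝ (Fin 3 → ℝ) = 3 := by simp [Module.finrank_pi]
  suffices hle : h ≤ P by
    exact Submodule.eq_of_le_of_finrank_eq hle (by rw [hdim, finrank_P])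
  by_contra hc
  obtain ⟨W, hWh, hWP⟩ := SetLike.not_le_iff_exists.mp hc
  clear hc
  have hW2 : W 2 ≠ 0 := fun e => hWP ((memP_iff W).mpr e)
  -- the intersection K = h ⊓ P has dimension 1
  set K : Submodule ℝ (Fin 3 → ℝ) := h ⊓ P with hKdef
  have hsum := Submodule.finrank_sup_add_finrank_inf_eq h P
  have hsuple : Module.finrank ℝ ↥(h ⊔ P) ≤ 3 := le_trans (Submodule.finrank_le _) (le_of_eq h3)
  have hKlt : K < h := by
    refine lt_of_le_of_ne inf_le_left (fun e => ?_)
    have : W ∈ K := e ▸ hWh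
    exact hWP this.2
  have hKlt2 : Module.finrank ℝ K < 2 :=
    hdim ▸ Submodule.finrank_lt_finrank_of_lt hKlt
  have hK1 : Module.finrank ℝ K = 1 := by
    rw [hdim, finrank_P, ← hKdef] at hsum
    omega
  -- get a nonzero vector V in K
  have hKne : K ≠ ⊥ := by
    intro e
    rw [e, finrank_bot] at hK1
    exact one_ne_zero hK1.symm
  obtain ⟨V, hVK, hV0⟩ := Submodule.exists_mem_ne_zero_of_ne_bot hKne
  have hspanV : Submodule.span ℝ ({V} : Set (Fin 3 → ℝ)) = K := by
    refine Submodule.eq_of_le_of_finrank_eq ?_ ?_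
    · rw [Submodule.span_le]; simpa using hVK
    · rw [finrank_span_singleton hV0, hK1]
  have hVh : V ∈ h := hVK.1
  have hV2 : V 2 = 0 := (memP_iff V).mp hVK.2
  -- the bracket [V, W] lies in K, hence is a multiple of V
  have hBh : brk l1 l2 0 V W ∈ h := hclosed V hVh W hWh
  have hB2 : brk l1 l2 0 V W 2 = 0 := by simp [brk]
  have hBK : brk l1 l2 0 V W ∈ K :=
    Submodule.mem_inf.mpr ⟨hBh, (memP_iff _).mpr hB2⟩
  rw [← hspanV] at hBK
  obtain ⟨t, ht⟩ := Submodule.mem_span_singleton.mp hBK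
  have eq0 : l1 * (V 1 * W 2 - V 2 * W 1) = t * V 0 := by
    have := congrFun ht 0
    simp [brk] at this
    linarith [this]
  have eq1 : l2 * (V 2 * W 0 - V 0 * W 2) = t * V 1 := by
    have := congrFun ht 1
    simp [brk] at this
    linarith [this]
  -- derive that V 0 = V 1 = 0, contradicting V ≠ 0
  rw [hV2] at eq0 eq1
  have key : (l1 * V 1 ^ 2 + l2 * V 0 ^ 2) * W 2 = 0 := by
    linear_combination V 1 * eq0 - V 0 * eq1
  have sum0 : l1 * V 1 ^ 2 + l2 * V 0 ^ 2 = 0 := by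
    rcases mul_eq_zero.mp key with hh | hh
    · exact hh
    · exact absurd hh hW2
  have hv0 : V 0 = 0 := by
    have h02 : l2 * V 0 ^ 2 = 0 := le_antisymm (by nlinarith [sq_nonneg (V 1)]) (by positivity)
    have := (mul_eq_zero.mp h02).resolve_left (ne_of_gt h2)
    exact pow_eq_zero_iff (n := 2) (by norm_num) |>.mp this
  have hv1 : V 1 = 0 := by
    have h12 : l1 * V 1 ^ 2 = 0 := le_antisymm (by nlinarith [sq_nonneg (V 0)]) (by positivity)
    have := (mul_eq_zero.mp h12).resolve_left (ne_of_gt hl1)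
    exact pow_eq_zero_iff (n := 2) (by norm_num) |>.mp this
  apply hV0
  funext i
  fin_cases i
  · exact hv0
  · exact hv1
  · exact hV2
end

section
/- Let g be a 3-dimensional real Lie algebra with orthonormal basis E1, E2, E3, an inner product making this basis orthonormal, and brackets [E1,E2]=λ3 E3, [E2,E3]=λ1 E1, [E3,E1]=λ2 E2. A 2-dimensional subspace h = span{A,B} of g is a Lie subalgebra if and only if λ1(a2 b3 − a3 b2)² + λ2(a3 b1 − a1 b3)² + λ3(a1 b2 − a2 b1)² = 0, where A = a1 E1 + a2 E2 + a3 E3 and B = b1 E1 + b2 E2 + b3 E3. -/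
open Matrix

/-- If a nonzero multiple of `v` is in a submodule, so is `v`. -/
lemma mem_of_smul_mem {p : Submodule ℝ (Fin 3 → ℝ)} {v : Fin 3 → ℝ} {r : ℝ}
    (hr : r ≠ 0) (h : r • v ∈ p) : v ∈ p := by
  have := p.smul_mem r⁻¹ h
  rwa [smul_smul, inv_mul_cancel₀ hr, one_smul] at this

/-- For linearly independent `A = a1 E1 + a2 E2 + a3 E3` and `B = b1 E1 + b2 E2 + b3 E3`,
the plane `span{A,B}` is a Lie subalgebra iff
`λ1(a2 b3 − a3 b2)² + λ2(a3 b1 − a1 b3)² + λ3(a1 b2 − a2 b1)² = 0`. -/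
theorem stmt1 (l1 l2 l3 a1 a2 a3 b1 b2 b3 : ℝ)
    (A B : Fin 3 → ℝ) (hA : A = ![a1, a2, a3]) (hB : B = ![b1, b2, b3])
    (hind : LinearIndependent ℝ ![A, B]) :
    (∀ X ∈ Submodule.span ℝ ({A, B} : Set (Fin 3 → ℝ)),
      ∀ Y ∈ Submodule.span ℝ ({A, B} : Set (Fin 3 → ℝ)),
        brk l1 l2 l3 X Y ∈ Submodule.span ℝ ({A, B} : Set (Fin 3 → ℝ))) ↔
      l1 * (a2 * b3 - a3 * b2) ^ 2 + l2 * (a3 * b1 - a1 * b3) ^ 2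
        + l3 * (a1 * b2 - a2 * b1) ^ 2 = 0 := by
  have hAmem : A ∈ Submodule.span ℝ ({A, B} : Set (Fin 3 → ℝ)) :=
    Submodule.subset_span (by simp)
  have hBmem : B ∈ Submodule.span ℝ ({A, B} : Set (Fin 3 → ℝ)) :=
    Submodule.subset_span (by simp)
  have hc : crossProduct A B ≠ 0 := crossProduct_ne_zero_iff_linearIndependent.mpr hind
  have hcc : crossProduct A B =
      ![a2 * b3 - a3 * b2, a3 * b1 - a1 * b3, a1 * b2 - a2 * b1] := by
    subst hA hB
    funext i
    fin_cases i <;> simp [crossProduct]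
  constructor
  · intro hcl
    obtain ⟨s, t, h⟩ := Submodule.mem_span_pair.mp (hcl A hAmem B hBmem)
    have e0 := congr_fun h 0
    have e1 := congr_fun h 1
    have e2 := congr_fun h 2
    subst hA hB
    simp [brk] at e0 e1 e2
    linear_combination (-(a2 * b3 - a3 * b2)) * e0 + (-(a3 * b1 - a1 * b3)) * e1
      + (-(a1 * b2 - a2 * b1)) * e2
  · intro hq
    have hne : a2 * b3 - a3 * b2 ≠ 0 ∨ a3 * b1 - a1 * b3 ≠ 0 ∨ a1 * b2 - a2 * b1 ≠ 0 := by
      by_contra hcon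
      push_neg at hcon
      apply hc
      rw [hcc]
      funext i
      fin_cases i <;> simp [hcon.1, hcon.2.1, hcon.2.2]
    -- core: brk A B ∈ span {A, B}
    have key : brk l1 l2 l3 A B ∈ Submodule.span ℝ ({A, B} : Set (Fin 3 → ℝ)) := by
      rcases hne with h1 | h2 | h3
      · refine mem_of_smul_mem h1 (Submodule.mem_span_pair.mpr
          ⟨l2 * (a3*b1 - a1*b3) * b3 - l3 * (a1*b2 - a2*b1) * b2,
           a2 * (l3 * (a1*b2 - a2*b1)) - a3 * (l2 * (a3*b1 - a1*b3)), ?_⟩)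
        subst hA hB
        funext i
        fin_cases i <;>
          simp [brk, Pi.smul_apply, smul_eq_mul] <;> [linear_combination -hq; ring; ring]
      · refine mem_of_smul_mem h2 (Submodule.mem_span_pair.mpr
          ⟨l3 * (a1*b2 - a2*b1) * b1 - l1 * (a2*b3 - a3*b2) * b3,
           a3 * (l1 * (a2*b3 - a3*b2)) - a1 * (l3 * (a1*b2 - a2*b1)), ?_⟩)
        subst hA hB
        funext i
        fin_cases i <;>
          simp [brk, Pi.smul_apply, smul_eq_mul] <;> [ring; linear_combination -hq; ring]
      · refine mem_of_smul_mem h3 (Submodule.mem_span_pair.mpr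
          ⟨l1 * (a2*b3 - a3*b2) * b2 - l2 * (a3*b1 - a1*b3) * b1,
           a1 * (l2 * (a3*b1 - a1*b3)) - a2 * (l1 * (a2*b3 - a3*b2)), ?_⟩)
        subst hA hB
        funext i
        fin_cases i <;>
          simp [brk, Pi.smul_apply, smul_eq_mul] <;> [ring; ring; linear_combination -hq]
    intro X hX Y hY
    obtain ⟨p, q, hXe⟩ := Submodule.mem_span_pair.mp hX
    obtain ⟨r, s, hYe⟩ := Submodule.mem_span_pair.mp hY
    have hb : brk l1 l2 l3 X Y = (p * s - q * r) • brk l1 l2 l3 A B := by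
      subst hXe hYe
      funext i
      fin_cases i <;> simp [brk, Pi.add_apply, Pi.smul_apply, smul_eq_mul] <;> ring
    rw [hb]
    exact Submodule.smul_mem _ _ key
end

section
/- Let g be the Lie algebra sol₃ with orthonormal basis E1, E2, E3 and brackets [E2,E3]=λ1 E1, [E1,E2]=λ3 E3, [E3,E1]=0, with λ1 > 0 > λ3. Then every 2-dimensional Lie subalgebra of g equals span{E1,E3}, or is conjugate (via the adjoint action of an element of the exponential of span{E1,E3}) to span{√λ1 E1 + ε √(−λ3) E3, E2} for some ε ∈ {+1,−1}. -/
open Matrix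

lemma memN (v : Fin 3 → ℝ) :
    v ∈ Submodule.span ℝ ({![1,0,0], ![0,0,1]} : Set (Fin 3 → ℝ)) ↔ v 1 = 0 := by
  constructor
  · intro hv
    induction hv using Submodule.span_induction with
    | mem x hx =>
      simp only [Set.mem_insert_iff, Set.mem_singleton_iff] at hx
      rcases hx with rfl | rfl <;> simp
    | zero => simp
    | add x y _ _ hx hy => simp [hx, hy]
    | smul a x _ hx => simp [hx]
  · intro hv
    have : v = v 0 • ![1,0,0] + v 2 • ![0,0,1] := by
      funext i; fin_cases i <;> simp [hv]
    rw [this]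
    exact Submodule.add_mem _
      (Submodule.smul_mem _ _ (Submodule.subset_span (by simp)))
      (Submodule.smul_mem _ _ (Submodule.subset_span (by simp)))

/-- Every 2-dimensional Lie subalgebra of sol₃ is either `span{E1,E3}` or the
image, under the inner automorphism `e^{ad_C} = id + ad_C` for some
`C ∈ span{E1,E3}`, of `span{√λ1 E1 + ε √(−λ3) E3, E2}` for some sign `ε`. -/
theorem stmt4 (l1 l3 : ℝ) (h1 : 0 < l1) (h3 : l3 < 0)
    (h : Submodule ℝ (Fin 3 → ℝ)) (hdim : Module.finrank ℝ h = 2)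
    (hclosed : ∀ X ∈ h, ∀ Y ∈ h, brk l1 0 l3 X Y ∈ h) :
    h = Submodule.span ℝ ({![1,0,0], ![0,0,1]} : Set (Fin 3 → ℝ)) ∨
      ∃ ε : ℝ, (ε = 1 ∨ ε = -1) ∧
        ∃ C ∈ Submodule.span ℝ ({![1,0,0], ![0,0,1]} : Set (Fin 3 → ℝ)),
          h = Submodule.span ℝ
            ((fun X => X + brk l1 0 l3 C X) ''
              ({![Real.sqrt l1, 0, ε * Real.sqrt (-l3)], ![0,1,0]} : Set (Fin 3 → ℝ))) := by
  set N : Submodule ℝ (Fin 3 → ℝ) :=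
    Submodule.span ℝ ({![1,0,0], ![0,0,1]} : Set (Fin 3 → ℝ)) with hNdef
  -- N is the kernel of the projection to the middle coordinate
  have hNker : N = LinearMap.ker (LinearMap.proj 1 : (Fin 3 → ℝ) →ₗ[ℝ] ℝ) := by
    ext v
    rw [hNdef, memN, LinearMap.mem_ker]
    rfl
  have hNrank : Module.finrank ℝ N = 2 := by
    have hsurj : Function.Surjective (LinearMap.proj 1 : (Fin 3 → ℝ) →ₗ[ℝ] ℝ) :=
      fun y => ⟨fun _ => y, rfl⟩
    have hrn := LinearMap.finrank_range_add_finrank_ker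
      (LinearMap.proj 1 : (Fin 3 → ℝ) →ₗ[ℝ] ℝ)
    rw [LinearMap.range_eq_top.mpr hsurj, finrank_top] at hrn
    rw [hNker]
    simp only [Module.finrank_self, Module.finrank_fin_fun] at hrn
    omega
  by_cases hsub : h ≤ N
  · left
    exact Submodule.eq_of_le_of_finrank_le hsub (by rw [hNrank, hdim])
  right
  obtain ⟨X, hXh, hXN⟩ := SetLike.not_le_iff_exists.mp hsub
  clear hsub
  have hx1 : X 1 ≠ 0 := fun h0 => hXN ((memN X).mpr h0)
  set X' : Fin 3 → ℝ := (X 1)⁻¹ • X with hX'def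
  have hX'h : X' ∈ h := Submodule.smul_mem _ _ hXh
  have hX'1 : X' 1 = 1 := by
    simp [hX'def, inv_mul_cancel₀ hx1]
  -- h ⊔ N = ⊤, so h ⊓ N has rank 1
  have hlt : N < h ⊔ N := by
    refine lt_of_le_of_ne le_sup_right fun e => hXN ?_
    rw [e]; exact Submodule.mem_sup_left hXh
  have hsup3 : Module.finrank ℝ ↥(h ⊔ N) = 3 := by
    have hle : Module.finrank ℝ ↥(h ⊔ N) ≤ 3 := by
      have := Submodule.finrank_le (h ⊔ N)
      simpa using this
    have := Submodule.finrank_lt_finrank_of_lt hlt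
    omega
  have hinf1 : Module.finrank ℝ ↥(h ⊓ N) = 1 := by
    have := Submodule.finrank_sup_add_finrank_inf_eq h N
    omega
  -- pick a nonzero W in h ⊓ N
  have hne : ∃ W ∈ h ⊓ N, W ≠ 0 := by
    by_contra hno
    push_neg at hno
    have hbot : h ⊓ N = ⊥ := (Submodule.eq_bot_iff _).mpr hno
    rw [hbot] at hinf1
    simp at hinf1
  obtain ⟨W, hWmem, hW0⟩ := hne
  have hWh : W ∈ h := hWmem.1
  have hW1 : W 1 = 0 := (memN W).mp hWmem.2
  have hspanW : Submodule.span ℝ ({W} : Set (Fin 3 → ℝ)) = h ⊓ N := by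
    refine Submodule.eq_of_le_of_finrank_le
      ((Submodule.span_singleton_le_iff_mem _ _).mpr hWmem) ?_
    rw [finrank_span_singleton hW0, hinf1]
  have key : ∀ Z ∈ h, Z 1 = 0 → ∃ c : ℝ, Z = c • W := by
    intro Z hZ hZ1
    have hZmem : Z ∈ h ⊓ N := ⟨hZ, (memN Z).mpr hZ1⟩
    rw [← hspanW] at hZmem
    obtain ⟨c, hc⟩ := Submodule.mem_span_singleton.mp hZmem
    exact ⟨c, hc.symm⟩
  -- bracket relation forces W ∝ (√l1, 0, ±√(-l3))
  have hBh : brk l1 0 l3 X' W ∈ h := hclosed X' hX'h W hWh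
  have hB1 : brk l1 0 l3 X' W 1 = 0 := by simp [brk]
  obtain ⟨t, ht⟩ := key _ hBh hB1
  have e0 : l1 * (X' 1 * W 2 - X' 2 * W 1) = t * W 0 := by
    have := congrFun ht 0
    simpa [brk] using this
  have e2 : l3 * (X' 0 * W 1 - X' 1 * W 0) = t * W 2 := by
    have := congrFun ht 2
    simpa [brk] using this
  rw [hX'1, hW1] at e0 e2
  have hsq : l1 * (W 2)^2 = -l3 * (W 0)^2 := by
    linear_combination W 2 * e0 - W 0 * e2
  have hα : W 0 ≠ 0 := by
    intro h0
    have h' : l1 * W 2 ^ 2 = 0 := by rw [h0] at hsq; linarith [hsq]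
    have hβ : W 2 = 0 := by
      rcases mul_eq_zero.mp h' with h'' | h''
      · exact absurd h''.symm h1.ne
      · exact pow_eq_zero_iff two_ne_zero |>.mp h''
    apply hW0
    funext i; fin_cases i
    · exact h0
    · exact hW1
    · exact hβ
  have hl1s : Real.sqrt l1 ^ 2 = l1 := Real.sq_sqrt h1.le
  have hl3s : Real.sqrt (-l3) ^ 2 = -l3 := Real.sq_sqrt (by linarith)
  have hfac : (Real.sqrt l1 * W 2 - Real.sqrt (-l3) * W 0) *
      (Real.sqrt l1 * W 2 + Real.sqrt (-l3) * W 0) = 0 := by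
    linear_combination (W 2)^2 * hl1s - (W 0)^2 * hl3s + hsq
  obtain ⟨ε, hεpm, hε⟩ : ∃ ε : ℝ, (ε = 1 ∨ ε = -1) ∧
      Real.sqrt l1 * W 2 = ε * (Real.sqrt (-l3) * W 0) := by
    rcases mul_eq_zero.mp hfac with hc | hc
    · exact ⟨1, Or.inl rfl, by linarith⟩
    · exact ⟨-1, Or.inr rfl, by linarith⟩
  have hsl1 : (0:ℝ) < Real.sqrt l1 := Real.sqrt_pos.mpr h1
  set V : Fin 3 → ℝ := ![Real.sqrt l1, 0, ε * Real.sqrt (-l3)] with hVdef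
  have hWV : W = (W 0 / Real.sqrt l1) • V := by
    funext i; fin_cases i
    · show W 0 = W 0 / Real.sqrt l1 * Real.sqrt l1
      field_simp
    · show W 1 = W 0 / Real.sqrt l1 * 0
      rw [hW1]; ring
    · show W 2 = W 0 / Real.sqrt l1 * (ε * Real.sqrt (-l3))
      rw [div_mul_eq_mul_div, eq_div_iff hsl1.ne']
      linear_combination hε
  have hl1ne : l1 ≠ 0 := h1.ne'
  have hl3ne : l3 ≠ 0 := h3.ne
  have hVh : V ∈ h := by
    have hVW : V = (Real.sqrt l1 / W 0) • W := by
      funext i; fin_cases i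
      · show Real.sqrt l1 = Real.sqrt l1 / W 0 * W 0
        field_simp
      · show (0:ℝ) = Real.sqrt l1 / W 0 * W 1
        rw [hW1]; ring
      · show ε * Real.sqrt (-l3) = Real.sqrt l1 / W 0 * W 2
        rw [div_mul_eq_mul_div, eq_comm, div_eq_iff hα]
        linear_combination hε
    rw [hVW]
    exact Submodule.smul_mem _ _ hWh
  -- the conjugating element
  set C : Fin 3 → ℝ := ![X' 2 / l3, 0, -(X' 0) / l1] with hCdef
  have hCN : C ∈ N := (memN C).mpr rfl
  refine ⟨ε, hεpm, C, hCN, ?_⟩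
  have hφV : ![Real.sqrt l1, 0, ε * Real.sqrt (-l3)]
      + brk l1 0 l3 C ![Real.sqrt l1, 0, ε * Real.sqrt (-l3)] = V := by
    funext i; fin_cases i <;> simp [brk, hCdef, hVdef]
  have hφE2 : ![0,1,0] + brk l1 0 l3 C ![0,1,0] = X' := by
    funext i; fin_cases i
    · simp [brk, hCdef]
      field_simp
    · simp [brk, hX'1]
    · simp [brk, hCdef]
      field_simp
  have himg : (fun Z => Z + brk l1 0 l3 C Z) ''
      ({![Real.sqrt l1, 0, ε * Real.sqrt (-l3)], ![0,1,0]} : Set (Fin 3 → ℝ))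
      = {V, X'} := by
    rw [Set.image_pair, hφV, hφE2]
  rw [himg]
  apply le_antisymm
  · intro Y hY
    rw [Submodule.mem_span_pair]
    have hZh : Y - Y 1 • X' ∈ h := Submodule.sub_mem _ hY (Submodule.smul_mem _ _ hX'h)
    have hZ1 : (Y - Y 1 • X') 1 = 0 := by
      simp [hX'1]
    obtain ⟨c, hc⟩ := key _ hZh hZ1
    refine ⟨c * (W 0 / Real.sqrt l1), Y 1, ?_⟩
    rw [mul_smul, ← hWV, ← hc]
    abel
  · rw [Submodule.span_le]
    intro v hv
    simp only [Set.mem_insert_iff, Set.mem_singleton_iff] at hv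
    rcases hv with rfl | rfl
    · exact hVh
    · exact hX'h
end

section
/- The linear map φ on sol₃ defined by φ(E1)=E1, φ(E2)=−E2, φ(E3)=−E3 is a Lie algebra automorphism preserving the inner product, and it maps span{√λ1 E1 + √(−λ3) E3, E2} onto span{√λ1 E1 − √(−λ3) E3, E2}. -/
open Matrix

/-- The map `φ(E1)=E1, φ(E2)=−E2, φ(E3)=−E3`. -/
def phi (X : Fin 3 → ℝ) : Fin 3 → ℝ := ![X 0, -X 1, -X 2]

lemma phi_linear : IsLinearMap ℝ phi := by
  constructor
  · intro x y; funext i; fin_cases i <;> simp [phi] <;> ring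
  · intro c x; funext i; fin_cases i <;> simp [phi] <;> ring

lemma phi_invol : ∀ X, phi (phi X) = X := by
  intro X; funext i; fin_cases i <;> simp [phi]

/-- `φ` is a linear Lie algebra automorphism of sol₃ preserving the inner product,
mapping `span{√λ1 E1 + √(−λ3) E3, E2}` onto `span{√λ1 E1 − √(−λ3) E3, E2}`. -/
theorem stmt5 (l1 l3 : ℝ) (h1 : 0 < l1) (h3 : l3 < 0) :
    IsLinearMap ℝ phi ∧
    Function.Bijective phi ∧
    (∀ X Y : Fin 3 → ℝ, phi (brk l1 0 l3 X Y) = brk l1 0 l3 (phi X) (phi Y)) ∧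
    (∀ X Y : Fin 3 → ℝ, phi X ⬝ᵥ phi Y = X ⬝ᵥ Y) ∧
    phi '' (Submodule.span ℝ
        ({![Real.sqrt l1, 0, Real.sqrt (-l3)], ![0,1,0]} : Set (Fin 3 → ℝ)) : Set (Fin 3 → ℝ)) =
      (Submodule.span ℝ
        ({![Real.sqrt l1, 0, -Real.sqrt (-l3)], ![0,1,0]} : Set (Fin 3 → ℝ)) : Set (Fin 3 → ℝ)) := by
  refine ⟨phi_linear, Function.Involutive.bijective phi_invol, ?_, ?_, ?_⟩
  · intro X Y; funext i; fin_cases i <;> simp [phi, brk] <;> ring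
  · intro X Y
    simp [phi, dotProduct, Fin.sum_univ_three]

  · have := ((IsLinearMap.mk' phi phi_linear) : (Fin 3 → ℝ) →ₗ[ℝ] (Fin 3 → ℝ))
    have himg : phi '' (Submodule.span ℝ
        ({![Real.sqrt l1, 0, Real.sqrt (-l3)], ![0,1,0]} : Set (Fin 3 → ℝ)) : Set (Fin 3 → ℝ)) =
        ((Submodule.span ℝ
        ({![Real.sqrt l1, 0, Real.sqrt (-l3)], ![0,1,0]} : Set (Fin 3 → ℝ))).map (IsLinearMap.mk' phi phi_linear) :
          Set (Fin 3 → ℝ)) := rfl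
    rw [himg, Submodule.map_span, Set.image_insert_eq, Set.image_singleton]
    have e1 : (IsLinearMap.mk' phi phi_linear) ![Real.sqrt l1, 0, Real.sqrt (-l3)]
        = ![Real.sqrt l1, 0, -Real.sqrt (-l3)] := by
      show phi _ = _
      funext i; fin_cases i <;> simp [phi]
    have e2 : (IsLinearMap.mk' phi phi_linear) ![0,1,0] = -![(0:ℝ),1,0] := by
      show phi _ = _
      funext i; fin_cases i <;> simp [phi]
    rw [e1, e2]
    have hsp : Submodule.span ℝ ({![Real.sqrt l1, 0, -Real.sqrt (-l3)], -![0,1,0]} : Set (Fin 3 → ℝ))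
        = Submodule.span ℝ ({![Real.sqrt l1, 0, -Real.sqrt (-l3)], ![0,1,0]} : Set (Fin 3 → ℝ)) := by
      refine le_antisymm ?_ ?_ <;> rw [Submodule.span_le] <;> intro x hx <;>
        rcases hx with h | h <;> subst h
      · exact Submodule.subset_span (by simp)
      · exact Submodule.neg_mem _ (Submodule.subset_span (by simp))
      · exact Submodule.subset_span (by simp)
      · have := Submodule.neg_mem (Submodule.span ℝ
          ({![Real.sqrt l1, 0, -Real.sqrt (-l3)], -![0,1,0]} : Set (Fin 3 → ℝ)))
          (Submodule.subset_span (by simp : (-![(0:ℝ),1,0]) ∈ _))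
        simpa using this
    exact congrArg SetLike.coe hsp
end

section
/- Let x,y,z: ℝ → ℝ satisfy the unimodular geodesic system x' = −yz(λ3−λ2), y' = −xz(λ1−λ3), z' = −xy(λ2−λ1), with λ1 > λ2 > 0 > λ3, and initial conditions x(0)=√(−λ3/(λ1−λ3)), y(0)=0, z(0)=−√(λ1/(λ1−λ3)). Then for all t, x(t)² = ((λ3−λ2)y(t)² − λ3)/(λ1−λ3) and z(t)² = ((λ2−λ1)y(t)² + λ1)/(λ1−λ3). -/
lemma const_of_deriv_zero {g : ℝ → ℝ} (h : ∀ t, HasDerivAt g 0 t) (t : ℝ) : g t = g 0 := by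
  have hd : Differentiable ℝ g := fun t => (h t).differentiableAt
  have : ∀ t, deriv g t = 0 := fun t => (h t).deriv
  exact is_const_of_deriv_eq_zero hd this t 0

/-- Conserved quantities of the unimodular geodesic system: for a solution of
`x' = −yz(λ3−λ2)`, `y' = −xz(λ1−λ3)`, `z' = −xy(λ2−λ1)` with the stated initial
conditions, `x² = ((λ3−λ2)y² − λ3)/(λ1−λ3)` and `z² = ((λ2−λ1)y² + λ1)/(λ1−λ3)`. -/
theorem stmt12 (l1 l2 l3 : ℝ) (h12 : l1 > l2) (h2 : l2 > 0) (h3 : 0 > l3)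
    (x y z : ℝ → ℝ)
    (hx : ∀ t, HasDerivAt x (-(y t * z t * (l3 - l2))) t)
    (hy : ∀ t, HasDerivAt y (-(x t * z t * (l1 - l3))) t)
    (hz : ∀ t, HasDerivAt z (-(x t * y t * (l2 - l1))) t)
    (hx0 : x 0 = Real.sqrt (-l3 / (l1 - l3)))
    (hy0 : y 0 = 0)
    (hz0 : z 0 = -Real.sqrt (l1 / (l1 - l3))) :
    ∀ t, x t ^ 2 = ((l3 - l2) * y t ^ 2 - l3) / (l1 - l3) ∧
         z t ^ 2 = ((l2 - l1) * y t ^ 2 + l1) / (l1 - l3) := by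
  have h13 : l1 - l3 > 0 := by linarith
  have h13' : l1 - l3 ≠ 0 := ne_of_gt h13
  -- first conserved quantity
  have hf : ∀ t, HasDerivAt (fun t => x t ^ 2 - (l3 - l2) / (l1 - l3) * y t ^ 2) 0 t := by
    intro t
    have h1 := ((hx t).fun_pow 2).fun_sub (((hy t).fun_pow 2).const_mul ((l3 - l2) / (l1 - l3)))
    refine h1.congr_deriv ?_
    field_simp
    ring
  have hg : ∀ t, HasDerivAt (fun t => z t ^ 2 - (l2 - l1) / (l1 - l3) * y t ^ 2) 0 t := by
    intro t
    have h1 := ((hz t).fun_pow 2).fun_sub (((hy t).fun_pow 2).const_mul ((l2 - l1) / (l1 - l3)))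
    refine h1.congr_deriv ?_
    field_simp
    ring
  have hx02 : x 0 ^ 2 = -l3 / (l1 - l3) := by
    rw [hx0, Real.sq_sqrt]
    exact div_nonneg (by linarith) h13.le
  have hz02 : z 0 ^ 2 = l1 / (l1 - l3) := by
    rw [hz0, neg_pow, Real.sq_sqrt]
    · ring
    · exact div_nonneg (by linarith) h13.le
  intro t
  have hF := const_of_deriv_zero hf t
  have hG := const_of_deriv_zero hg t
  simp only [hy0, hx02, hz02] at hF hG
  constructor
  · field_simp at hF ⊢
    linarith [hF]
  · field_simp at hG ⊢
    linarith [hG]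
end

section
/- The functions x(t) = √(−λ3/(λ1−λ3))·sech(t√(−λ1λ3)), y(t) = tanh(t√(−λ1λ3)), z(t) = −√(λ1/(λ1−λ3))·sech(t√(−λ1λ3)) solve the system x' = −yz(λ3−λ2), y' = −xz(λ1−λ3), z' = −xy(λ2−λ1) with λ2 = 0 and λ1 > 0 > λ3, and satisfy x(t)² + y(t)² + z(t)² = 1 for all t. -/
/-- The explicit functions solve the geodesic system of Sol₃ (`λ2 = 0`,
`λ1 > 0 > λ3`) and have unit norm. -/
theorem stmt13 (l1 l3 : ℝ) (h1 : 0 < l1) (h3 : l3 < 0) :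
    let x : ℝ → ℝ := fun t => Real.sqrt (-l3 / (l1 - l3)) * (1 / Real.cosh (t * Real.sqrt (-(l1 * l3))))
    let y : ℝ → ℝ := fun t => Real.tanh (t * Real.sqrt (-(l1 * l3)))
    let z : ℝ → ℝ := fun t => -(Real.sqrt (l1 / (l1 - l3)) * (1 / Real.cosh (t * Real.sqrt (-(l1 * l3)))))
    (∀ t, HasDerivAt x (-(y t * z t * (l3 - 0))) t) ∧
    (∀ t, HasDerivAt y (-(x t * z t * (l1 - l3))) t) ∧
    (∀ t, HasDerivAt z (-(x t * y t * (0 - l1))) t) ∧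
    (∀ t, x t ^ 2 + y t ^ 2 + z t ^ 2 = 1) := by
  intro x y z
  simp only [x, y, z, one_div]
  clear x y z
  have hd : (0:ℝ) < l1 - l3 := by linarith
  have ha2' : Real.sqrt (-(l1*l3)) ^ 2 = -(l1 * l3) := Real.sq_sqrt (by nlinarith)
  have hs1sq' : Real.sqrt (-l3 / (l1 - l3)) ^ 2 = -l3 / (l1 - l3) :=
    Real.sq_sqrt (le_of_lt (div_pos (by linarith) hd))
  have hs2sq' : Real.sqrt (l1 / (l1 - l3)) ^ 2 = l1 / (l1 - l3) :=
    Real.sq_sqrt (le_of_lt (div_pos h1 hd))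
  set a := Real.sqrt (-(l1 * l3)) with ha
  set s1 := Real.sqrt (-l3 / (l1 - l3)) with hs1
  set s2 := Real.sqrt (l1 / (l1 - l3)) with hs2
  have hs1pos : 0 < s1 := Real.sqrt_pos.2 (div_pos (by linarith) hd)
  have hs2pos : 0 < s2 := Real.sqrt_pos.2 (div_pos h1 hd)
  have hapos : 0 < a := Real.sqrt_pos.2 (by nlinarith)
  clear_value a s1 s2
  rename' ha2' => ha2, hs1sq' => hs1sq, hs2sq' => hs2sq
  clear ha hs1 hs2
  have h12 : s1 * s2 = a / (l1 - l3) := by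
    have heq : (s1 * s2) ^ 2 = (a / (l1 - l3)) ^ 2 := by
      rw [mul_pow, hs1sq, hs2sq, div_pow, ha2]; field_simp
    have hpos : 0 < a / (l1 - l3) := by positivity
    nlinarith [mul_pos hs1pos hs2pos]
  have h1a : s1 * a = -l3 * s2 := by
    have heq : (s1 * a) ^ 2 = (-l3 * s2) ^ 2 := by
      rw [mul_pow, mul_pow, hs1sq, hs2sq, ha2]; field_simp
    have hpos : 0 < -l3 * s2 := by nlinarith
    nlinarith [mul_pos hs1pos hapos]
  have h2a : s2 * a = l1 * s1 := by
    have heq : (s2 * a) ^ 2 = (l1 * s1) ^ 2 := by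
      rw [mul_pow, mul_pow, hs1sq, hs2sq, ha2]; field_simp
    have hpos : 0 < l1 * s1 := by positivity
    nlinarith [mul_pos hs2pos hapos]
  have hcosh : ∀ t : ℝ, HasDerivAt (fun t => Real.cosh (t * a)) (Real.sinh (t * a) * a) t := by
    intro t
    have := (Real.hasDerivAt_cosh (t * a)).comp t ((hasDerivAt_id t).mul_const a)
    simpa [Function.comp_def] using this
  have hsinh : ∀ t : ℝ, HasDerivAt (fun t => Real.sinh (t * a)) (Real.cosh (t * a) * a) t := by
    intro t
    have := (Real.hasDerivAt_sinh (t * a)).comp t ((hasDerivAt_id t).mul_const a)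
    simpa [Function.comp_def] using this
  have hcne : ∀ t : ℝ, Real.cosh (t * a) ≠ 0 := fun t => (Real.cosh_pos _).ne'
  have h12' : s1 * s2 * (l1 - l3) = a := by
    rw [h12]; field_simp
  have hsum : s1 ^ 2 + s2 ^ 2 = 1 := by
    rw [hs1sq, hs2sq]; field_simp; ring
  refine ⟨?_, ?_, ?_, ?_⟩
  · intro t
    have h := ((hcosh t).inv (hcne t)).const_mul s1
    convert h using 1
    case e'_4 => rfl
    case e'_5 => rfl
    case e'_8 => rfl
    have hsq := Real.cosh_sq_sub_sinh_sq (t * a)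
    rw [Real.tanh_eq_sinh_div_cosh]
    set c := Real.cosh (t * a)
    set s := Real.sinh (t * a)
    have hc : 0 < c := Real.cosh_pos _
    field_simp
    linear_combination s * h1a
  · intro t
    have h := (hsinh t).div (hcosh t) (hcne t)
    have heq : (fun t => Real.tanh (t * a)) = fun t => Real.sinh (t * a) / Real.cosh (t * a) := by
      funext u; exact Real.tanh_eq_sinh_div_cosh _
    rw [heq]
    convert h using 1
    case e'_4 => rfl
    case e'_5 => rfl
    case e'_8 => rfl
    have hsq := Real.cosh_sq_sub_sinh_sq (t * a)
    set c := Real.cosh (t * a)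
    set s := Real.sinh (t * a)
    have hc : 0 < c := Real.cosh_pos _
    field_simp
    linear_combination h12' - a * hsq
  · intro t
    have h := (((hcosh t).inv (hcne t)).const_mul s2).neg
    convert h using 1
    case e'_4 => rfl
    case e'_5 => rfl
    case e'_8 => rfl
    have hsq := Real.cosh_sq_sub_sinh_sq (t * a)
    rw [Real.tanh_eq_sinh_div_cosh]
    set c := Real.cosh (t * a)
    set s := Real.sinh (t * a)
    have hc : 0 < c := Real.cosh_pos _
    field_simp
    linear_combination (-s) * h2a
  · intro t
    have hsq := Real.cosh_sq_sub_sinh_sq (t * a)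
    rw [Real.tanh_eq_sinh_div_cosh]
    set c := Real.cosh (t * a)
    set s := Real.sinh (t * a)
    have hc : 0 < c := Real.cosh_pos _
    field_simp
    linear_combination hsum - hsq
end

section
/- Let α,β ≥ 0 with β ≠ 0, α ∉ {0,1}, let c = (α + ε√(1−(1−α²)(1+β²)))/((1−α)β) for ε ∈ {+1,−1} (assuming 1−(1−α²)(1+β²) ≥ 0), and let ω = (1−α)(1+βc). Then ω ≠ 0, and the functions x(t) = (c/√(1+c²))·sech(ωt), y(t) = (−1/√(1+c²))·sech(ωt), z(t) = −tanh(ωt) solve the system x' = (1+α)(x+βy)z, y' = (1−α)(y−βx)z, z' = −((1+α)x² + 2αβxy + (1−α)y²). -/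
/-- For `β ≠ 0`, `α ∉ {0,1}`, `c = (α + ε√(1−(1−α²)(1+β²)))/((1−α)β)` and
`ω = (1−α)(1+βc)`: `ω ≠ 0`, and the stated functions solve the non-unimodular
geodesic system. -/
theorem stmt15 (a b ε : ℝ) (ha : 0 ≤ a) (hb0 : 0 ≤ b) (hb : b ≠ 0)
    (ha0 : a ≠ 0) (ha1 : a ≠ 1) (hε : ε = 1 ∨ ε = -1)
    (hD : 0 ≤ 1 - (1 - a ^ 2) * (1 + b ^ 2)) :
    let c : ℝ := (a + ε * Real.sqrt (1 - (1 - a ^ 2) * (1 + b ^ 2))) / ((1 - a) * b)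
    let ω : ℝ := (1 - a) * (1 + b * c)
    let x : ℝ → ℝ := fun t => (c / Real.sqrt (1 + c ^ 2)) * (1 / Real.cosh (ω * t))
    let y : ℝ → ℝ := fun t => (-1 / Real.sqrt (1 + c ^ 2)) * (1 / Real.cosh (ω * t))
    let z : ℝ → ℝ := fun t => -Real.tanh (ω * t)
    ω ≠ 0 ∧
    (∀ t, HasDerivAt x ((1 + a) * (x t + b * y t) * z t) t) ∧
    (∀ t, HasDerivAt y ((1 - a) * (y t - b * x t) * z t) t) ∧
    (∀ t, HasDerivAt z (-((1 + a) * x t ^ 2 + 2 * a * b * (x t * y t) + (1 - a) * y t ^ 2)) t) := by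
  intro c ω x y z
  set S : ℝ := Real.sqrt (1 - (1 - a ^ 2) * (1 + b ^ 2)) with hSdef
  have hS0 : 0 ≤ S := Real.sqrt_nonneg _
  have hS2 : S ^ 2 = 1 - (1 - a ^ 2) * (1 + b ^ 2) := Real.sq_sqrt hD
  have hε2 : ε ^ 2 = 1 := by rcases hε with h | h <;> rw [h] <;> norm_num
  have h1a : (1 : ℝ) - a ≠ 0 := by intro h; apply ha1; linarith
  have hden : (1 - a) * b ≠ 0 := mul_ne_zero h1a hb
  have hd : (1 - a) * b * c = a + ε * S := by
    show (1 - a) * b * ((a + ε * S) / ((1 - a) * b)) = a + ε * S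
    field_simp
  have hnum : (a + ε * S) ^ 2 - 2 * a * (a + ε * S) + (1 + a) * (1 - a) * b ^ 2 = 0 := by
    linear_combination S ^ 2 * hε2 + hS2
  have hq : (1 - a) * b * c ^ 2 - 2 * a * c + (1 + a) * b = 0 := by
    have h2 : (1 - a) * b * ((1 - a) * b * c ^ 2 - 2 * a * c + (1 + a) * b) = 0 := by
      linear_combination ((1 - a) * b * c + (a + ε * S) - 2 * a) * hd + hnum
    exact (mul_eq_zero.mp h2).resolve_left hden
  have hωc : ω = (1 - a) * (1 + b * c) := rfl
  have hω : ω = 1 + ε * S := by rw [hωc]; linear_combination hd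
  have hωne : ω ≠ 0 := by
    rw [hω]
    rcases hε with h | h
    · subst h; positivity
    · subst h
      intro hcontra
      have hS1 : S = 1 := by linarith
      have h0 : (1 - a ^ 2) * (1 + b ^ 2) = 0 := by nlinarith [hS2]
      have hb2 : (0 : ℝ) < 1 + b ^ 2 := by positivity
      have h1 : 1 - a ^ 2 = 0 := by
        rcases mul_eq_zero.1 h0 with h | h
        · exact h
        · linarith
      have : a = 1 := by nlinarith
      exact ha1 this
  clear_value c
  clear_value ω
  clear hd hS2 hS0 hSdef hε2 hε hD
  -- square root of 1 + c²
  set Q : ℝ := Real.sqrt (1 + c ^ 2) with hQdef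
  have hQ2 : Q ^ 2 = 1 + c ^ 2 := Real.sq_sqrt (by positivity)
  have hQne : Q ≠ 0 := by
    have : (0:ℝ) < Q := Real.sqrt_pos.2 (by positivity)
    linarith
  refine ⟨hωne, ?_, ?_, ?_⟩
  all_goals intro t
  -- common derivative facts
  all_goals
    have hlin : HasDerivAt (fun s : ℝ => ω * s) ω t := by
      simpa using (hasDerivAt_id t).const_mul ω
    have hch : HasDerivAt (fun t : ℝ => Real.cosh (ω * t)) (Real.sinh (ω * t) * ω) t :=
      (Real.hasDerivAt_cosh (ω * t)).comp t hlin
    have hsh : HasDerivAt (fun t : ℝ => Real.sinh (ω * t)) (Real.cosh (ω * t) * ω) t :=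
      (Real.hasDerivAt_sinh (ω * t)).comp t hlin
    have hcne : Real.cosh (ω * t) ≠ 0 := (Real.cosh_pos (ω * t)).ne'
    have hinv : HasDerivAt (fun t : ℝ => 1 / Real.cosh (ω * t))
        (-(Real.sinh (ω * t) * ω) / Real.cosh (ω * t) ^ 2) t := by
      simp only [one_div]
      exact hch.inv hcne
    have hpyth := Real.cosh_sq_sub_sinh_sq (ω * t)
  · -- x equation
    have h := hinv.const_mul (c / Q)
    convert h using 1
    show (1 + a) * ((c / Q) * (1 / Real.cosh (ω * t)) + b * ((-1 / Q) * (1 / Real.cosh (ω * t)))) *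
        (-Real.tanh (ω * t)) = _
    rw [Real.tanh_eq_sinh_div_cosh]
    have key : ω * c = (1 + a) * (c - b) := by rw [hωc]; linear_combination hq
    field_simp
    linear_combination (Real.sinh (ω * t)) * key
    all_goals rfl
  · -- y equation
    have h := hinv.const_mul ((-1 : ℝ) / Q)
    convert h using 1
    show (1 - a) * ((-1 / Q) * (1 / Real.cosh (ω * t)) - b * ((c / Q) * (1 / Real.cosh (ω * t)))) *
        (-Real.tanh (ω * t)) = _
    rw [Real.tanh_eq_sinh_div_cosh]
    field_simp
    linear_combination (-Real.sinh (ω * t)) * hωc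
    all_goals rfl
  · -- z equation
    have htanh : HasDerivAt (fun t : ℝ => -Real.tanh (ω * t))
        (-(ω / Real.cosh (ω * t) ^ 2)) t := by
      have hdiv := hsh.div hch hcne
      have h1 : HasDerivAt (fun t : ℝ => Real.sinh (ω * t) / Real.cosh (ω * t))
          (ω / Real.cosh (ω * t) ^ 2) t := by
        convert hdiv using 1
        any_goals rfl
        congr 1
        linear_combination (-ω) * hpyth
      have := h1.neg
      simp only [Real.tanh_eq_sinh_div_cosh]
      exact this
    convert htanh using 1
    show -((1 + a) * ((c / Q) * (1 / Real.cosh (ω * t))) ^ 2 +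
        2 * a * b * (((c / Q) * (1 / Real.cosh (ω * t))) * ((-1 / Q) * (1 / Real.cosh (ω * t)))) +
        (1 - a) * ((-1 / Q) * (1 / Real.cosh (ω * t))) ^ 2) = _
    have hQω : Q ^ 2 * ω = (1 + a) * c ^ 2 - 2 * a * b * c + (1 - a) := by
      rw [hQ2, hωc]; linear_combination c * hq
    field_simp
    linear_combination hQω
end

section
/- Let g = k ⊕ p be the canonical decomposition of the isometry Lie algebra of M = M'×ℝ where M' is a rank-one symmetric surface of nonzero curvature, with p = p' ⊕ r, p' 2-dimensional, r 1-dimensional central, [p',p'] ⊆ k, [k,p'] ⊆ p', and [X,Y] ≠ 0 for linearly independent X,Y ∈ p'. Then a 2-dimensional subspace v ⊆ p is a Lie triple system (i.e., [X,[Y,Z]] ∈ v for all X,Y,Z ∈ v) if and only if v = p' or v = span{X} ⊕ r for some X ∈ p'. -/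
open Submodule Module

-- auxiliary: a nonzero element of a 1-dim submodule spans it
lemma aux_span_eq_of_one_dim {L : Type} [AddCommGroup L] [Module ℝ L]
    {r : Submodule ℝ L} (hr1 : Module.finrank ℝ r = 1) {z : L}
    (hz : z ∈ r) (hz0 : z ≠ 0) : Submodule.span ℝ {z} = r := by
  haveI : FiniteDimensional ℝ r := FiniteDimensional.of_finrank_pos (by omega)
  refine Submodule.eq_of_le_of_finrank_le ?_ ?_
  · rwa [Submodule.span_singleton_le_iff_mem]
  · rw [hr1, finrank_span_singleton hz0]

/-- In the isometry Lie algebra `g = k ⊕ p' ⊕ r` of `M' × ℝ` (`M'` a rank-one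
symmetric surface of nonzero curvature), a 2-dimensional subspace `v ⊆ p = p' ⊕ r`
is a Lie triple system iff `v = p'` or `v = span{X} ⊕ r` for some `X ∈ p'`. -/
theorem stmt19 (L : Type) [LieRing L] [LieAlgebra ℝ L]
    (k p' r : Submodule ℝ L)
    (ip : L →ₗ[ℝ] L →ₗ[ℝ] ℝ)
    (hsymm : ∀ X Y : L, ip X Y = ip Y X)
    (hpos : ∀ X ∈ p', X ≠ 0 → 0 < ip X X)
    (hp'2 : Module.finrank ℝ p' = 2)
    (hr1 : Module.finrank ℝ r = 1)
    (hdisj : p' ⊓ r = ⊥)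
    (hcentral : ∀ X ∈ r, ∀ Y ∈ p' ⊔ r, ⁅X, Y⁆ = 0)
    (hpp : ∀ X ∈ p', ∀ Y ∈ p', ⁅X, Y⁆ ∈ k)
    (hkp : ∀ X ∈ k, ∀ Y ∈ p', ⁅X, Y⁆ ∈ p')
    (hne : ∀ X ∈ p', ∀ Y ∈ p', LinearIndependent ℝ ![X, Y] → ⁅X, Y⁆ ≠ 0)
    (hcurv : ∀ X ∈ p', ∀ Y ∈ p', ip X X = 1 → ip Y Y = 1 → ip X Y = 0 →
      (∃ c : ℝ, c ≠ 0 ∧ ⁅X, ⁅X, Y⁆⁆ = c • Y) ∧ (∃ c : ℝ, c ≠ 0 ∧ ⁅Y, ⁅X, Y⁆⁆ = c • X))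
    (v : Submodule ℝ L) (hv : v ≤ p' ⊔ r) (hv2 : Module.finrank ℝ v = 2) :
    (∀ X ∈ v, ∀ Y ∈ v, ∀ Z ∈ v, ⁅X, ⁅Y, Z⁆⁆ ∈ v) ↔
      (v = p' ∨ ∃ X ∈ p', v = Submodule.span ℝ {X} ⊔ r) := by
  haveI : FiniteDimensional ℝ p' := FiniteDimensional.of_finrank_pos (by omega)
  haveI : FiniteDimensional ℝ r := FiniteDimensional.of_finrank_pos (by omega)
  haveI : FiniteDimensional ℝ v := FiniteDimensional.of_finrank_pos (by omega)
  -- brackets of r-elements with p ⊔ r vanish, both sides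
  have hc' : ∀ X ∈ p' ⊔ r, ∀ u ∈ r, ⁅X, u⁆ = 0 := by
    intro X hX u hu
    rw [← lie_skew, hcentral u hu X hX, neg_zero]
  constructor
  · intro hLTS
    by_cases hrv : r ≤ v
    · -- v = span{X} ⊔ r
      right
      have hnotle : ¬ v ≤ r := by
        intro h
        have := Submodule.finrank_mono (R := ℝ) (M := L) h
        omega
      obtain ⟨w, hwv, hwr⟩ := SetLike.not_le_iff_exists.mp hnotle
      obtain ⟨X, hXp, u, hur, hXu⟩ := Submodule.mem_sup.mp (hv hwv)
      have hX0 : X ≠ 0 := by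
        rintro rfl
        rw [zero_add] at hXu
        exact hwr (hXu ▸ hur)
      have hXv : X ∈ v := by
        have : X = w - u := by rw [← hXu]; abel
        rw [this]
        exact Submodule.sub_mem v hwv (hrv hur)
      refine ⟨X, hXp, ?_⟩
      have hle : Submodule.span ℝ {X} ⊔ r ≤ v :=
        sup_le ((Submodule.span_singleton_le_iff_mem X v).mpr hXv) hrv
      haveI : FiniteDimensional ℝ (Submodule.span ℝ {X} ⊔ r : Submodule ℝ L) :=
        Submodule.finiteDimensional_sup _ _
      have hinf : Submodule.span ℝ {X} ⊓ r = ⊥ := by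
        have h := inf_le_inf_right r ((Submodule.span_singleton_le_iff_mem X p').mpr hXp)
        rw [hdisj] at h
        exact le_bot_iff.mp h
      have hsum := Submodule.finrank_sup_add_finrank_inf_eq (Submodule.span ℝ {X}) r
      rw [hinf, finrank_bot, finrank_span_singleton hX0, hr1] at hsum
      exact (Submodule.eq_of_le_of_finrank_le hle (by omega)).symm
    · -- v = p'
      left
      have hvr : v ⊓ r = ⊥ := by
        by_contra h
        obtain ⟨z, hz, hz0⟩ := Submodule.exists_mem_ne_zero_of_ne_bot h
        exact hrv ((aux_span_eq_of_one_dim hr1 hz.2 hz0) ▸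
          (Submodule.span_singleton_le_iff_mem z v).mpr hz.1)
      by_cases hvp : v ≤ p'
      · exact Submodule.eq_of_le_of_finrank_le hvp (by omega)
      exfalso
      -- v ⊓ p' is nontrivial
      haveI : FiniteDimensional ℝ (p' ⊔ r : Submodule ℝ L) := Submodule.finiteDimensional_sup _ _
      have hdim3 : Module.finrank ℝ (p' ⊔ r : Submodule ℝ L) ≤ 3 := by
        have := Submodule.finrank_sup_add_finrank_inf_eq p' r
        rw [hdisj, finrank_bot] at this
        omega
      have hsum := Submodule.finrank_sup_add_finrank_inf_eq v p'
      have hle3 : Module.finrank ℝ (v ⊔ p' : Submodule ℝ L) ≤ 3 :=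
        le_trans (Submodule.finrank_mono (sup_le hv le_sup_left)) hdim3
      have hint : 0 < Module.finrank ℝ (v ⊓ p' : Submodule ℝ L) := by omega
      have hne_bot : v ⊓ p' ≠ ⊥ := by
        intro h
        rw [h] at hint
        simp [finrank_bot] at hint
      obtain ⟨z, hz, hz0⟩ := Submodule.exists_mem_ne_zero_of_ne_bot hne_bot
      obtain ⟨X0v, X0p⟩ := hz
      -- get w ∈ v not in p'
      obtain ⟨w, hwv, hwp⟩ := SetLike.not_le_iff_exists.mp hvp
      obtain ⟨Y0, hY0p, u, hur, hYu⟩ := Submodule.mem_sup.mp (hv hwv)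
      have hu0 : u ≠ 0 := by
        rintro rfl
        rw [add_zero] at hYu
        exact hwp (hYu ▸ hY0p)
      -- normalize
      set a := ip z z with ha
      have hapos : 0 < a := hpos z X0p hz0
      set X : L := (Real.sqrt a)⁻¹ • z with hXdef
      have hsa : Real.sqrt a ≠ 0 := by positivity
      have hXp : X ∈ p' := Submodule.smul_mem _ _ X0p
      have hXv : X ∈ v := Submodule.smul_mem _ _ X0v
      have hXX : ip X X = 1 := by
        simp only [hXdef, map_smul, LinearMap.smul_apply, smul_eq_mul]
        rw [← ha]
        field_simp
        rw [Real.sq_sqrt hapos.le]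
      set c := ip X Y0 with hc
      set Y1 : L := Y0 - c • X with hY1def
      have hY1p : Y1 ∈ p' := Submodule.sub_mem _ hY0p (Submodule.smul_mem _ _ hXp)
      have hY10 : Y1 ≠ 0 := by
        intro h
        have hY0 : Y0 = c • X := by rwa [hY1def, sub_eq_zero] at h
        have : u ∈ v := by
          have hu : u = w - (c * (Real.sqrt a)⁻¹) • z := by
            rw [← hYu, hY0, hXdef, smul_smul]; abel
          rw [hu]
          exact Submodule.sub_mem v hwv (Submodule.smul_mem _ _ X0v)
        have : u ∈ v ⊓ r := ⟨this, hur⟩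
        rw [hvr] at this
        exact hu0 this
      set b := ip Y1 Y1 with hb
      have hbpos : 0 < b := hpos Y1 hY1p hY10
      have hsb : Real.sqrt b ≠ 0 := by positivity
      set Y : L := (Real.sqrt b)⁻¹ • Y1 with hYdef
      have hYp : Y ∈ p' := Submodule.smul_mem _ _ hY1p
      have hYY : ip Y Y = 1 := by
        simp only [hYdef, map_smul, LinearMap.smul_apply, smul_eq_mul]
        rw [← hb]
        field_simp
        rw [Real.sq_sqrt hbpos.le]
      have hXY1 : ip X Y1 = 0 := by
        simp only [hY1def, map_sub, map_smul, LinearMap.sub_apply, LinearMap.smul_apply,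
          smul_eq_mul, ← hc, hXX]
        ring
      have hXY : ip X Y = 0 := by
        simp only [hYdef, map_smul, smul_eq_mul, hXY1, mul_zero]
      set f : L := (Real.sqrt b)⁻¹ • u with hfdef
      have hfr : f ∈ r := Submodule.smul_mem _ _ hur
      have hYfv : Y + f ∈ v := by
        have : Y + f = (Real.sqrt b)⁻¹ • (w - c • X) := by
          rw [hYdef, hfdef, hY1def, ← hYu]
          module
        rw [this]
        exact Submodule.smul_mem _ _ (Submodule.sub_mem v hwv (Submodule.smul_mem _ _ hXv))
      obtain ⟨⟨c', hc'0, hcc⟩, -⟩ := hcurv X hXp Y hYp hXX hYY hXY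
      have hbr : ⁅X, Y + f⁆ = ⁅X, Y⁆ := by
        rw [lie_add, hc' X (le_sup_left (a := p') (b := r) hXp) f hfr, add_zero]
      have hmem : ⁅X, ⁅X, Y + f⁆⁆ ∈ v := hLTS X hXv X hXv (Y + f) hYfv
      rw [hbr, hcc] at hmem
      have hYv : Y ∈ v := by
        have := Submodule.smul_mem v c'⁻¹ hmem
        rwa [smul_smul, inv_mul_cancel₀ hc'0, one_smul] at this
      have hfv : f ∈ v := by
        have : f = (Y + f) - Y := by abel
        rw [this]; exact Submodule.sub_mem v hYfv hYv
      have hf0 : f ≠ 0 := by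
        rw [hfdef]
        exact smul_ne_zero (inv_ne_zero hsb) hu0
      have : f ∈ v ⊓ r := ⟨hfv, hfr⟩
      rw [hvr] at this
      exact hf0 this
  · rintro (rfl | ⟨X, hXp, rfl⟩)
    · intro A hA B hB C hC
      have hk : ⁅B, C⁆ ∈ k := hpp B hB C hC
      have := hkp _ hk A hA
      rw [← lie_skew]
      exact Submodule.neg_mem _ this
    · intro A hA B hB C hC
      have hzero : ∀ z ∈ Submodule.span ℝ {X} ⊔ r, ∀ z' ∈ Submodule.span ℝ {X} ⊔ r, ⁅z, z'⁆ = 0 := by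
        intro z hz z' hz'
        obtain ⟨s, hs, u2, hu2, rfl⟩ := Submodule.mem_sup.mp hz
        obtain ⟨s', hs', u2', hu2', rfl⟩ := Submodule.mem_sup.mp hz'
        obtain ⟨a, rfl⟩ := Submodule.mem_span_singleton.mp hs
        obtain ⟨a', rfl⟩ := Submodule.mem_span_singleton.mp hs'
        have hXpr : X ∈ p' ⊔ r := le_sup_left (a := p') (b := r) hXp
        simp only [add_lie, lie_add, smul_lie, lie_smul, lie_self, smul_zero,
          hcentral u2 hu2 X hXpr,
          hcentral u2 hu2 u2' (le_sup_right (a := p') (b := r) hu2'),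
          hc' X hXpr u2' hu2', smul_zero, add_zero, zero_add]
      rw [hzero B hB C hC, lie_zero]
      exact Submodule.zero_mem _
end
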